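/- Let X be a zigzag poset, ι : X' ↪ X the inclusion of the alternating subposet, and F a persistent sheaf on X. Then H^k(X, F) ≅ H^k(X', ι*F) as persistence modules, for all k ≥ 0. -/

import Mathlib

open CategoryTheory

/-! Zigzag posets.  A zigzag poset is a finite poset whose Hasse diagram is a path
`x_0 — x_1 — ... — x_n` with arbitrarily oriented edges.  We encode the orientation
of the edge between `x_l` and `x_{l+1}` by `o l : Bool` (`true` means `x_l < x_{l+1}`),
and `x_i ≤ x_j` iff all the edges between them point from `x_i` towards `x_j`. -/

/-- The order relation of the zigzag poset with edge orientations `o`. -/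
def zigzagLE (o : ℕ → Bool) (i j : ℕ) : Prop :=
  (i ≤ j ∧ ∀ l, i ≤ l → l < j → o l = true) ∨
  (j ≤ i ∧ ∀ l, j ≤ l → l < i → o l = false)

theorem zigzagLE_refl (o : ℕ → Bool) (i : ℕ) : zigzagLE o i i :=
  Or.inl ⟨le_rfl, fun _ h1 h2 => absurd (lt_of_le_of_lt h1 h2) (lt_irrefl _)⟩

theorem zigzagLE_trans (o : ℕ → Bool) (i j l : ℕ)
    (h1 : zigzagLE o i j) (h2 : zigzagLE o j l) : zigzagLE o i l := by
  rcases h1 with ⟨hij, hup1⟩ | ⟨hji, hdn1⟩ <;> rcases h2 with ⟨hjl, hup2⟩ | ⟨hlj, hdn2⟩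
  · refine Or.inl ⟨le_trans hij hjl, fun m hm1 hm2 => ?_⟩
    rcases Nat.lt_or_ge m j with h | h
    · exact hup1 m hm1 h
    · exact hup2 m h hm2
  · rcases le_or_gt i l with h | h
    · exact Or.inl ⟨h, fun m hm1 hm2 => hup1 m hm1 (lt_of_lt_of_le hm2 hlj)⟩
    · exact Or.inr ⟨le_of_lt h, fun m hm1 hm2 => hdn2 m hm1 (lt_of_lt_of_le hm2 hij)⟩
  · rcases le_or_gt i l with h | h
    · exact Or.inl ⟨h, fun m hm1 hm2 => hup2 m (le_trans hji hm1) hm2⟩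
    · exact Or.inr ⟨le_of_lt h, fun m hm1 hm2 => hdn1 m (le_trans hjl hm1) hm2⟩
  · refine Or.inr ⟨le_trans hlj hji, fun m hm1 hm2 => ?_⟩
    rcases Nat.lt_or_ge m j with h | h
    · exact hdn2 m hm1 h
    · exact hdn1 m h hm2

theorem zigzagLE_antisymm (o : ℕ → Bool) (i j : ℕ)
    (h1 : zigzagLE o i j) (h2 : zigzagLE o j i) : i = j := by
  rcases h1 with ⟨hij, hup1⟩ | ⟨hji, hdn1⟩ <;>
    rcases h2 with ⟨hji', hup2⟩ | ⟨hij', hdn2⟩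
  · omega
  · rcases Nat.lt_or_ge i j with h | h
    · have ht := hup1 i le_rfl h
      have hf := hdn2 i le_rfl h
      simp [ht] at hf
    · omega
  · rcases Nat.lt_or_ge j i with h | h
    · have ht := hup2 j le_rfl h
      have hf := hdn1 j le_rfl h
      simp [ht] at hf
    · omega
  · omega

/-- The zigzag poset on `{x_0, ..., x_n}` with edge orientations `o`. -/
def Zigzag (n : ℕ) (o : ℕ → Bool) : Type := Fin (n + 1)

instance (n : ℕ) (o : ℕ → Bool) : PartialOrder (Zigzag n o) where
  le i j := zigzagLE o (Fin.val i) (Fin.val j)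
  le_refl i := zigzagLE_refl o _
  le_trans i j l := zigzagLE_trans o _ _ _
  le_antisymm i j h1 h2 := Fin.ext (zigzagLE_antisymm o _ _ h1 h2)

/-- The index of a point of the zigzag poset. -/
def Zigzag.idx {n : ℕ} {o : ℕ → Bool} (x : Zigzag n o) : ℕ := Fin.val x

/-- The alternating subposet `X' ⊆ X`: all minimal elements together with the
internal maximal elements (the maximal elements flanked by minimal elements on
both sides); this is the alternating sequence of minimal and internal maximal
elements of the zigzag. -/
def altSet (n : ℕ) (o : ℕ → Bool) : Set (Zigzag n o) :=
  {x | IsMin x ∨ (IsMax x ∧ (∃ y : Zigzag n o, IsMin y ∧ y.idx < x.idx) ∧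
    (∃ y : Zigzag n o, IsMin y ∧ x.idx < y.idx))}

/-- The alternating subposet, with the induced order. -/
def AltSub (n : ℕ) (o : ℕ → Bool) : Type := {x : Zigzag n o // x ∈ altSet n o}

instance (n : ℕ) (o : ℕ → Bool) : PartialOrder (AltSub n o) :=
  inferInstanceAs (PartialOrder {x : Zigzag n o // x ∈ altSet n o})

/-- The inclusion `ι : X' ↪ X` is order preserving. -/
lemma altIncl_monotone (n : ℕ) (o : ℕ → Bool) :
    Monotone (fun x : AltSub n o => (x.val : Zigzag n o)) := fun _ _ h => h

/-- The restriction (pullback) functor `ι*` of sheaves along the inclusion of the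
alternating subposet. -/
noncomputable def restrictAlt (n : ℕ) (o : ℕ → Bool) (C : Type*) [Category C] :
    (Zigzag n o ⥤ C) ⥤ (AltSub n o ⥤ C) :=
  (Functor.whiskeringLeft (AltSub n o) (Zigzag n o) C).obj (altIncl_monotone n o).functor

open CategoryTheory.Limits

-- ===== auxiliary material =====


/-- descend left along ascending edges -/
def dlZ (o : ℕ → Bool) : ℕ → ℕ
  | 0 => 0
  | m + 1 => if o m then dlZ o m else m + 1

lemma dlZ_le (o : ℕ → Bool) (m : ℕ) : dlZ o m ≤ m := by
  induction m with
  | zero => simp [dlZ]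
  | succ m ih =>
    cases h : o m with
    | true => simp only [dlZ, h, if_true]; omega
    | false => simp [dlZ, h]

lemma dlZ_true (o : ℕ → Bool) (m : ℕ) : ∀ l, dlZ o m ≤ l → l < m → o l = true := by
  induction m with
  | zero => omega
  | succ m ih =>
    intro l h1 h2
    cases h : o m with
    | true =>
      simp only [dlZ, h, if_true] at h1
      rcases Nat.lt_or_ge l m with hl | hl
      · exact ih l h1 hl
      · have : l = m := by omega
        subst this; exact h
    | false =>
      simp only [dlZ, h] at h1
      simp at h1
      omega

lemma dlZ_min (o : ℕ → Bool) (m : ℕ) : dlZ o m = 0 ∨ o (dlZ o m - 1) = false := by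
  induction m with
  | zero => exact Or.inl rfl
  | succ m ih =>
    cases h : o m with
    | true => simpa only [dlZ, h, if_true] using ih
    | false =>
      right
      simp only [dlZ, h]
      simpa using h

lemma dlZ_lt (o : ℕ → Bool) (m : ℕ) (h : o m = true) : dlZ o (m + 1) ≤ m := by
  simp only [dlZ, h, if_true]; exact dlZ_le o m

/-- descend right along descending edges -/
def drZ (n : ℕ) (o : ℕ → Bool) (m : ℕ) : ℕ :=
  if h : m < n ∧ o m = false then drZ n o (m + 1) else m
termination_by n - m
decreasing_by
  obtain ⟨h1, -⟩ := h
  omega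

lemma drZ_spec (n : ℕ) (o : ℕ → Bool) (m : ℕ) (hm : m ≤ n) :
    m ≤ drZ n o m ∧ drZ n o m ≤ n ∧
      (∀ l, m ≤ l → l < drZ n o m → o l = false) ∧
      (drZ n o m = n ∨ o (drZ n o m) = true) := by
  have key : ∀ k m, n - m ≤ k → m ≤ n →
      m ≤ drZ n o m ∧ drZ n o m ≤ n ∧
        (∀ l, m ≤ l → l < drZ n o m → o l = false) ∧
        (drZ n o m = n ∨ o (drZ n o m) = true) := by
    intro k
    induction k with
    | zero =>
      intro m hk hm
      have hmn : m = n := by omega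
      rw [drZ, dif_neg (by omega)]
      exact ⟨le_rfl, hm, fun l h1 h2 => by omega, Or.inl hmn⟩
    | succ k ih =>
      intro m hk hm
      rw [drZ]
      by_cases h : m < n ∧ o m = false
      · rw [dif_pos h]
        obtain ⟨h1, h2⟩ := h
        obtain ⟨a, b, c, d⟩ := ih (m + 1) (by omega) (by omega)
        refine ⟨by omega, b, fun l hl1 hl2 => ?_, d⟩
        rcases Nat.lt_or_ge l (m + 1) with hl | hl
        · have : l = m := by omega
          subst this; exact h2
        · exact c l hl hl2
      · rw [dif_neg h]
        refine ⟨le_rfl, hm, fun l h1 h2 => by omega, ?_⟩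
        by_cases hmn : m = n
        · exact Or.inl hmn
        · right
          cases hb : o m with
          | false => exact absurd ⟨lt_of_le_of_ne hm hmn, hb⟩ h
          | true => rfl
  exact key (n - m) m le_rfl hm

lemma drZ_gt (n : ℕ) (o : ℕ → Bool) (m : ℕ) (h1 : m < n) (h2 : o m = false) :
    m < drZ n o m := by
  rw [drZ, dif_pos ⟨h1, h2⟩]
  have := (drZ_spec n o (m + 1) (by omega)).1
  omega

namespace ZigzagAux

variable {n : ℕ} {o : ℕ → Bool}

lemma idx_le (x : Zigzag n o) : x.idx ≤ n := Nat.lt_succ_iff.mp (show Fin (n+1) from x).isLt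

/-- make an element of the zigzag from an index -/
def zmk (n : ℕ) (o : ℕ → Bool) (m : ℕ) (h : m ≤ n) : Zigzag n o :=
  (⟨m, Nat.lt_succ_of_le h⟩ : Fin (n + 1))

@[simp] lemma zmk_idx {m : ℕ} (h : m ≤ n) : (zmk n o m h).idx = m := rfl

lemma le_iff' {x y : Zigzag n o} : x ≤ y ↔ zigzagLE o x.idx y.idx := Iff.rfl

lemma zig_ext {x y : Zigzag n o} (h : x.idx = y.idx) : x = y := Fin.ext h

lemma isMin_iff {x : Zigzag n o} :
    IsMin x ↔ (x.idx = 0 ∨ o (x.idx - 1) = false) ∧ (x.idx = n ∨ o x.idx = true) := by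
  constructor
  · intro h
    constructor
    · by_contra hc
      push_neg at hc
      obtain ⟨h0, h1⟩ := hc
      have h1' : o (x.idx - 1) = true := by simpa using h1
      have hy : zmk n o (x.idx - 1) (by have := idx_le x; omega) ≤ x := by
        rw [le_iff']
        simp only [zmk_idx]
        refine Or.inl ⟨by omega, fun l hl1 hl2 => ?_⟩
        have : l = x.idx - 1 := by omega
        subst this; exact h1'
      have hxy := le_iff'.mp (h hy)
      simp only [zmk_idx] at hxy
      rcases hxy with ⟨hle, -⟩ | ⟨-, hf⟩
      · omega
      · have hfa := hf (x.idx - 1) le_rfl (by omega)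
        rw [hfa] at h1'
        exact Bool.false_ne_true h1'
    · by_contra hc
      push_neg at hc
      obtain ⟨h0, h1⟩ := hc
      have h1' : o x.idx = false := by simpa using h1
      have hidx := idx_le x
      have hy : zmk n o (x.idx + 1) (by omega) ≤ x := by
        rw [le_iff']
        simp only [zmk_idx]
        refine Or.inr ⟨by omega, fun l hl1 hl2 => ?_⟩
        have : l = x.idx := by omega
        subst this; exact h1'
      have hxy := le_iff'.mp (h hy)
      simp only [zmk_idx] at hxy
      rcases hxy with ⟨-, ht⟩ | ⟨hle, -⟩
      · have hta := ht x.idx le_rfl (by omega)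
        rw [hta] at h1'
        exact absurd h1' (by simp)
      · omega
  · rintro ⟨hA, hB⟩ y hy
    rcases le_iff'.mp hy with ⟨h1, h2⟩ | ⟨h1, h2⟩
    · rcases Nat.lt_or_ge y.idx x.idx with hl | hl
      · exfalso
        have ht := h2 (x.idx - 1) (by omega) (by omega)
        rcases hA with h | h
        · omega
        · rw [ht] at h; exact absurd h (by simp)
      · have : y = x := zig_ext (by omega)
        subst this; exact le_rfl
    · rcases Nat.lt_or_ge x.idx y.idx with hl | hl
      · exfalso
        have hf := h2 x.idx le_rfl hl
        rcases hB with h | h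
        · have := idx_le y; omega
        · rw [hf] at h; exact Bool.false_ne_true h
      · have : y = x := zig_ext (by omega)
        subst this; exact le_rfl

lemma isMax_of_local {x : Zigzag n o} (hA : x.idx = 0 ∨ o (x.idx - 1) = true)
    (hB : x.idx = n ∨ o x.idx = false) : IsMax x := by
  intro y hy
  rcases le_iff'.mp hy with ⟨h1, h2⟩ | ⟨h1, h2⟩
  · rcases Nat.lt_or_ge x.idx y.idx with hl | hl
    · exfalso
      have ht := h2 x.idx le_rfl hl
      rcases hB with h | h
      · have := idx_le y; omega
      · rw [ht] at h; exact absurd h (by simp)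
    · have : y = x := zig_ext (by omega)
      subst this; exact le_rfl
  · rcases Nat.lt_or_ge y.idx x.idx with hl | hl
    · exfalso
      have hf := h2 (x.idx - 1) (by omega) (by omega)
      rcases hA with h | h
      · omega
      · rw [hf] at h; exact Bool.false_ne_true h
    · have : y = x := zig_ext (by omega)
      subst this; exact le_rfl

lemma isMin_dl {m : ℕ} (hm : m ≤ n) (h0 : 0 < m) (h1 : o (m - 1) = true) :
    IsMin (zmk n o (dlZ o m) (le_trans (dlZ_le o m) hm)) ∧ dlZ o m < m := by
  obtain ⟨m', rfl⟩ : ∃ m', m = m' + 1 := ⟨m - 1, by omega⟩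
  have h1' : o m' = true := by simpa using h1
  have hlt : dlZ o (m' + 1) < m' + 1 := by
    have := dlZ_lt o m' h1'; omega
  refine ⟨isMin_iff.mpr ⟨by simpa using dlZ_min o (m' + 1), ?_⟩, hlt⟩
  exact Or.inr (by simpa using dlZ_true o (m' + 1) _ le_rfl hlt)

lemma isMin_dr {m : ℕ} (h1 : m < n) (h2 : o m = false) :
    IsMin (zmk n o (drZ n o m) (drZ_spec n o m (le_of_lt h1)).2.1) ∧ m < drZ n o m := by
  obtain ⟨ha, hb, hc, hd⟩ := drZ_spec n o m (le_of_lt h1)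
  have hgt := drZ_gt n o m h1 h2
  refine ⟨isMin_iff.mpr ⟨?_, by simpa using hd⟩, hgt⟩
  right
  simp only [zmk_idx]
  exact hc (drZ n o m - 1) (by omega) (by omega)

open scoped Classical in
/-- projection of the zigzag onto the alternating subposet (right adjoint to inclusion) -/
noncomputable def projZ (n : ℕ) (o : ℕ → Bool) (x : Zigzag n o) : Zigzag n o :=
  if x ∈ altSet n o then x
  else if 0 < x.idx ∧ o (x.idx - 1) = true then
    zmk n o (dlZ o x.idx) (le_trans (dlZ_le o x.idx) (idx_le x))
  else zmk n o (drZ n o x.idx) (drZ_spec n o x.idx (idx_le x)).2.1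

lemma proj_le (x : Zigzag n o) : projZ n o x ≤ x := by
  rw [projZ]
  split
  · exact le_rfl
  · split
    · rw [le_iff']
      simp only [zmk_idx]
      exact Or.inl ⟨dlZ_le o x.idx, dlZ_true o x.idx⟩
    · rw [le_iff']
      simp only [zmk_idx]
      exact Or.inr ⟨(drZ_spec n o x.idx (idx_le x)).1, (drZ_spec n o x.idx (idx_le x)).2.2.1⟩

lemma proj_mem (x : Zigzag n o) : projZ n o x ∈ altSet n o := by
  rw [projZ]
  split
  · assumption
  · next hna =>
    split
    · next h2 =>
      exact Or.inl (isMin_dl (idx_le x) h2.1 h2.2).1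
    · next hnd =>
      have hnmin : ¬ IsMin x := fun h => hna (Or.inl h)
      rw [isMin_iff] at hnmin
      push_neg at hnd
      have hA : x.idx = 0 ∨ o (x.idx - 1) = false := by
        rcases Nat.eq_zero_or_pos x.idx with h | h
        · exact Or.inl h
        · exact Or.inr (by simpa using hnd h)
      have hB : ¬ (x.idx = n ∨ o x.idx = true) := fun hb => hnmin ⟨hA, hb⟩
      push_neg at hB
      obtain ⟨hBn, hBo⟩ := hB
      have hBo' : o x.idx = false := by simpa using hBo
      have hlt : x.idx < n := lt_of_le_of_ne (idx_le x) hBn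
      exact Or.inl (isMin_dr hlt hBo').1

lemma proj_ub {x' x : Zigzag n o} (hx' : x' ∈ altSet n o) (hle : x' ≤ x) :
    x' ≤ projZ n o x := by
  rw [projZ]
  split
  · exact hle
  · next hna =>
    have hmin : IsMin x' := by
      have hx'2 := hx'
      rcases hx'2 with h | ⟨hmax, -, -⟩
      · exact h
      · exfalso
        have heq : x = x' := le_antisymm (hmax hle) hle
        rw [heq] at hna
        exact hna hx'
    obtain ⟨hA', hB'⟩ := isMin_iff.mp hmin
    split
    · next h2 =>
      obtain ⟨hpos, hotrue⟩ := h2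
      rcases le_iff'.mp hle with ⟨h1, ht⟩ | ⟨h1, hf⟩
      · refine le_of_eq (zig_ext ?_)
        simp only [zmk_idx]
        rcases lt_trichotomy x'.idx (dlZ o x.idx) with hl | he | hg
        · exfalso
          have hdle := dlZ_le o x.idx
          have h01 : o (dlZ o x.idx - 1) = true := ht _ (by omega) (by omega)
          rcases dlZ_min o x.idx with h | h
          · omega
          · rw [h01] at h; exact absurd h (by simp)
        · exact he
        · exfalso
          have h01 : o (x'.idx - 1) = true :=
            dlZ_true o x.idx _ (by omega) (by omega)
          rcases hA' with h | h
          · omega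
          · rw [h01] at h; exact absurd h (by simp)
      · exfalso
        rcases Nat.eq_or_lt_of_le h1 with heq | hlt
        · have hxx : x' = x := zig_ext heq.symm
          rw [← hxx] at hna
          exact hna hx'
        · have hofalse : o x.idx = false := hf x.idx le_rfl hlt
          apply hna
          refine Or.inr ⟨isMax_of_local (Or.inr hotrue) (Or.inr hofalse), ?_, ?_⟩
          · obtain ⟨hm, hlt'⟩ := isMin_dl (idx_le x) hpos hotrue
            exact ⟨_, hm, by simpa using hlt'⟩
          · exact ⟨x', hmin, hlt⟩
    · next hnd =>
      push_neg at hnd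
      rcases le_iff'.mp hle with ⟨h1, ht⟩ | ⟨h1, hf⟩
      · exfalso
        rcases Nat.eq_or_lt_of_le h1 with heq | hlt
        · have hxx : x' = x := zig_ext heq
          rw [← hxx] at hna
          exact hna hx'
        · have h01 : o (x.idx - 1) = true := ht _ (by omega) (by omega)
          exact hnd (by omega) h01
      · refine le_of_eq (zig_ext ?_)
        simp only [zmk_idx]
        obtain ⟨ha, hb, hc, hd⟩ := drZ_spec n o x.idx (idx_le x)
        rcases lt_trichotomy x'.idx (drZ n o x.idx) with hl | he | hg
        · exfalso
          have h01 : o x'.idx = false := hc _ h1 hl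
          rcases hB' with h | h
          · omega
          · rw [h01] at h; exact Bool.false_ne_true h
        · exact he
        · exfalso
          have h01 : o (drZ n o x.idx) = false := hf _ ha hg
          rcases hd with h | h
          · have := idx_le x'; omega
          · rw [h01] at h; exact Bool.false_ne_true h

/-- the projection as a map to the subposet -/
noncomputable def piAlt (n : ℕ) (o : ℕ → Bool) (x : Zigzag n o) : AltSub n o :=
  ⟨projZ n o x, proj_mem x⟩

lemma gcAlt (n : ℕ) (o : ℕ → Bool) :
    GaloisConnection (fun x : AltSub n o => (x.val : Zigzag n o)) (piAlt n o) := by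
  intro a b
  constructor
  · intro h
    exact proj_ub a.2 h
  · intro h
    exact le_trans h (proj_le b)

end ZigzagAux

section DerivedComp

open CategoryTheory CategoryTheory.Limits

variable {A : Type*} [Category A] {B : Type*} [Category B] {T : Type*} [Category T]
variable [Abelian A] [Abelian B] [Abelian T]

/-- An exact injective-preserving functor maps injective resolutions to injective
resolutions. -/
noncomputable def mapInjectiveResolution (Φ : A ⥤ B) [Φ.Additive] [Φ.PreservesHomology]
    (hinj : ∀ (J : A), Injective J → Injective (Φ.obj J))
    {X : A} (I : InjectiveResolution X) : InjectiveResolution (Φ.obj X) where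
  cocomplex := (Φ.mapHomologicalComplex (ComplexShape.up ℕ)).obj I.cocomplex
  injective n := hinj _ (I.injective n)
  ι := (HomologicalComplex.singleMapHomologicalComplex Φ (ComplexShape.up ℕ) 0).inv.app X ≫
    (Φ.mapHomologicalComplex (ComplexShape.up ℕ)).map I.ι
  quasiIso := by
    have h1 : QuasiIso ((Φ.mapHomologicalComplex (ComplexShape.up ℕ)).map I.ι) :=
      inferInstance
    infer_instance

lemma mapInjectiveResolution_comm (Φ : A ⥤ B) [Φ.Additive] [Φ.PreservesHomology]
    (hinj : ∀ (J : A), Injective J → Injective (Φ.obj J))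
    {X Y : A} (f : X ⟶ Y) (I : InjectiveResolution X) (J : InjectiveResolution Y)
    (φ : I.cocomplex ⟶ J.cocomplex)
    (w : I.ι ≫ φ = (CochainComplex.single₀ A).map f ≫ J.ι) :
    (mapInjectiveResolution Φ hinj I).ι ≫
        (Φ.mapHomologicalComplex (ComplexShape.up ℕ)).map φ =
      (CochainComplex.single₀ B).map (Φ.map f) ≫ (mapInjectiveResolution Φ hinj J).ι := by
  dsimp only [mapInjectiveResolution]
  rw [Category.assoc, ← Functor.map_comp, w, Functor.map_comp, ← Category.assoc,
    ← Category.assoc]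
  congr 1
  exact ((HomologicalComplex.singleMapHomologicalComplex Φ (ComplexShape.up ℕ) 0).inv.naturality
    f).symm

/-- A choice of injective resolution. -/
noncomputable def chosenInjRes [HasInjectiveResolutions A] (X : A) : InjectiveResolution X :=
  (HasInjectiveResolution.out (Z := X)).some

/-- Derived functors of a composition with an exact injective-preserving functor. -/
noncomputable def rightDerivedCompNatIso
    [HasInjectiveResolutions A] [HasInjectiveResolutions B]
    (Φ : A ⥤ B) (L : B ⥤ T) [Φ.Additive] [Φ.PreservesHomology] [L.Additive]
    (hinj : ∀ (J : A), Injective J → Injective (Φ.obj J)) (n : ℕ) :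
    (Φ ⋙ L).rightDerived n ≅ Φ ⋙ L.rightDerived n := by
  refine NatIso.ofComponents
    (fun X => (chosenInjRes X).isoRightDerivedObj (Φ ⋙ L) n ≪≫
      ((mapInjectiveResolution Φ hinj (chosenInjRes X)).isoRightDerivedObj L n).symm)
    (fun {X Y} f => ?_)
  have h1 := InjectiveResolution.isoRightDerivedObj_hom_naturality f
    (chosenInjRes X) (chosenInjRes Y)
    (InjectiveResolution.desc f (chosenInjRes Y) (chosenInjRes X))
    (InjectiveResolution.desc_commutes_zero f (chosenInjRes Y) (chosenInjRes X)) (Φ ⋙ L) n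
  have hcomm := mapInjectiveResolution_comm Φ hinj f (chosenInjRes X) (chosenInjRes Y)
    (InjectiveResolution.desc f (chosenInjRes Y) (chosenInjRes X))
    (InjectiveResolution.desc_commutes f (chosenInjRes Y) (chosenInjRes X))
  have h2 := InjectiveResolution.isoRightDerivedObj_inv_naturality (Φ.map f)
    (mapInjectiveResolution Φ hinj (chosenInjRes X))
    (mapInjectiveResolution Φ hinj (chosenInjRes Y))
    ((Φ.mapHomologicalComplex (ComplexShape.up ℕ)).map
      (InjectiveResolution.desc f (chosenInjRes Y) (chosenInjRes X)))
    (by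
      have h0 := HomologicalComplex.congr_hom hcomm 0
      exact (HomologicalComplex.comp_f _ _ 0).symm.trans (h0.trans (by simp; rfl))) L n
  show _ ≫ (_ ≫ _) = (_ ≫ _) ≫ _
  rw [← Category.assoc, h1, Category.assoc, Category.assoc]
  congr 1
  exact h2.symm

/-- Right derived functors of naturally isomorphic functors are naturally isomorphic. -/
noncomputable def rightDerivedMapIso [HasInjectiveResolutions A]
    {F G : A ⥤ T} [F.Additive] [G.Additive] (e : F ≅ G) (n : ℕ) :
    F.rightDerived n ≅ G.rightDerived n where
  hom := NatTrans.rightDerived e.hom n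
  inv := NatTrans.rightDerived e.inv n
  hom_inv_id := by
    rw [← NatTrans.rightDerived_comp, e.hom_inv_id, NatTrans.rightDerived_id]
  inv_hom_id := by
    rw [← NatTrans.rightDerived_comp, e.inv_hom_id, NatTrans.rightDerived_id]

end DerivedComp

open CategoryTheory.Limits

instance restrictAlt_additive (n : ℕ) (o : ℕ → Bool) (C : Type*) [CategoryTheory.Category C]
    [CategoryTheory.Preadditive C] : (restrictAlt n o C).Additive where
  map_add := by
    intros
    ext
    simp [restrictAlt]
    rfl

universe uZZ in
theorem persistent_cohomology_zigzag_alt_iso_aux.{u} (k : Type) [Field k] (n : ℕ) (o : ℕ → Bool)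
    [(lim : (Zigzag n o ⥤ ModuleCat.{u} k) ⥤ ModuleCat.{u} k).Additive]
    [(lim : (AltSub n o ⥤ ModuleCat.{u} k) ⥤ ModuleCat.{u} k).Additive]
    [HasInjectiveResolutions (Zigzag n o ⥤ ModuleCat.{u} k)]
    [HasInjectiveResolutions (AltSub n o ⥤ ModuleCat.{u} k)]
    (F : ℕ ⥤ (Zigzag n o ⥤ ModuleCat.{u} k))
    (hft : ∃ m : ℕ, ∀ i j : ℕ, ∀ h : i ≤ j, m ≤ i → CategoryTheory.IsIso (F.map h.hom))
    (j : ℕ) :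
    Nonempty ((F ⋙ (lim : (Zigzag n o ⥤ ModuleCat.{u} k) ⥤ ModuleCat.{u} k).rightDerived j) ≅
      ((F ⋙ restrictAlt n o (ModuleCat.{u} k)) ⋙
        (lim : (AltSub n o ⥤ ModuleCat.{u} k) ⥤ ModuleCat.{u} k).rightDerived j)) := by
  constructor
  have adjP : (altIncl_monotone n o).functor ⊣ ((ZigzagAux.gcAlt n o).monotone_u).functor :=
    (ZigzagAux.gcAlt n o).adjunction
  haveI : (altIncl_monotone n o).functor.Initial := Functor.initial_of_adjunction adjP
  have e : (restrictAlt n o (ModuleCat.{u} k) ⋙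
        (lim : (AltSub n o ⥤ ModuleCat.{u} k) ⥤ ModuleCat.{u} k)) ≅
      (lim : (Zigzag n o ⥤ ModuleCat.{u} k) ⥤ ModuleCat.{u} k) :=
    Functor.Initial.limIso (altIncl_monotone n o).functor
  haveI : Limits.PreservesFiniteLimits (restrictAlt n o (ModuleCat.{u} k)) := by
    haveI : PreservesLimitsOfSize.{0, 0} (restrictAlt n o (ModuleCat.{u} k)) :=
      inferInstanceAs (PreservesLimitsOfSize.{0, 0}
        ((Functor.whiskeringLeft (AltSub n o) (Zigzag n o) (ModuleCat.{u} k)).obj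
          (altIncl_monotone n o).functor))
    exact PreservesLimitsOfSize.preservesFiniteLimits _
  haveI : Limits.PreservesFiniteColimits (restrictAlt n o (ModuleCat.{u} k)) := by
    haveI : PreservesColimitsOfSize.{0, 0} (restrictAlt n o (ModuleCat.{u} k)) :=
      inferInstanceAs (PreservesColimitsOfSize.{0, 0}
        ((Functor.whiskeringLeft (AltSub n o) (Zigzag n o) (ModuleCat.{u} k)).obj
          (altIncl_monotone n o).functor))
    exact PreservesColimitsOfSize.preservesFiniteColimits _
  haveI : (restrictAlt n o (ModuleCat.{u} k)).PreservesHomology := inferInstance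
  have adjW := CategoryTheory.Adjunction.whiskerLeft (ModuleCat.{u} k) adjP
  have hinj : ∀ (G : Zigzag n o ⥤ ModuleCat.{u} k), Injective G →
      Injective ((restrictAlt n o (ModuleCat.{u} k)).obj G) := by
    intro G hG
    haveI := hG
    exact Injective.injective_of_adjoint adjW G
  exact
    Functor.isoWhiskerLeft F (rightDerivedMapIso e.symm j) ≪≫
      Functor.isoWhiskerLeft F (rightDerivedCompNatIso (restrictAlt n o (ModuleCat.{u} k))
        (lim : (AltSub n o ⥤ ModuleCat.{u} k) ⥤ ModuleCat.{u} k) hinj j) ≪≫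
      (Functor.associator F (restrictAlt n o (ModuleCat.{u} k)) _).symm

universe u_1

/-- Let `X` be a zigzag poset, `ι : X' ↪ X` the inclusion of the
alternating subposet, and `F` a persistent sheaf on `X` (a functor `ℕ ⥤ Shv(X, vec)`
of finite type).  Then `H^j(X, F) ≅ H^j(X', ι*F)` as persistence modules (functors
`ℕ ⥤ vec`), for every `j ≥ 0`. -/
theorem persistent_cohomology_zigzag_alt_iso (k : Type) [Field k] (n : ℕ) (o : ℕ → Bool)
    [(lim : (Zigzag n o ⥤ ModuleCat.{u_1} k) ⥤ ModuleCat.{u_1} k).Additive]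
    [(lim : (AltSub n o ⥤ ModuleCat.{u_1} k) ⥤ ModuleCat.{u_1} k).Additive]
    [HasInjectiveResolutions (Zigzag n o ⥤ ModuleCat.{u_1} k)]
    [HasInjectiveResolutions (AltSub n o ⥤ ModuleCat.{u_1} k)]
    (F : ℕ ⥤ (Zigzag n o ⥤ ModuleCat.{u_1} k))
    (hft : ∃ m : ℕ, ∀ i j : ℕ, ∀ h : i ≤ j, m ≤ i → CategoryTheory.IsIso (F.map h.hom))
    (j : ℕ) :
    Nonempty ((F ⋙ (lim : (Zigzag n o ⥤ ModuleCat.{u_1} k) ⥤ ModuleCat.{u_1} k).rightDerived j) ≅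
      ((F ⋙ restrictAlt n o (ModuleCat.{u_1} k)) ⋙
        (lim : (AltSub n o ⥤ ModuleCat.{u_1} k) ⥤ ModuleCat.{u_1} k).rightDerived j)) :=
  persistent_cohomology_zigzag_alt_iso_aux k n o F hft j
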